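/- Let Q be an acyclic (tree-shaped) directed query graph with vertices ordered x₁,…,x_n so that each x_j (j ≥ 2) is adjacent (ignoring edge direction) to exactly one earlier vertex, and let σ be a stable coloring of a finite directed graph G with lifted graph statistics ψ and τ (where τ_min = τ_avg = τ_max =: τ by stability). Then for every coloring π ∈ hom(Q,F), the number of homomorphisms π' : Q → G with σ ∘ π' = π equals W(π) := ψ(π(x₁)) · ∏_{(x_i,x_j)∈E_Q} τ(π(x_i), π(x_j)), and consequently |hom(Q,G)| = Σ_{π ∈ hom(Q,F)} W(π). -/

import Mathlib

open Finset

lemma aux_count {V C : Type*} [Fintype V] [DecidableEq V] [DecidableEq C]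
    (E : Finset (V × V)) (σ : V → C) (τout τin : C → C → ℕ)
    (hτout : ∀ (v : V) (c : C),
      (Finset.univ.filter (fun u => (v, u) ∈ E ∧ σ u = c)).card = τout (σ v) c)
    (hτin : ∀ (v : V) (c : C),
      (Finset.univ.filter (fun u => (u, v) ∈ E ∧ σ u = c)).card = τin (σ v) c) :
    ∀ (n : ℕ) (parent : Fin (n + 1) → Fin (n + 1)) (dir : Fin (n + 1) → Bool),
      (∀ j : Fin (n + 1), j ≠ 0 → parent j < j) → ∀ (g : Fin (n + 1) → C),
    (Finset.univ.filter (fun f : Fin (n + 1) → V =>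
        (∀ j : Fin (n + 1), j ≠ 0 →
          (if dir j then (f (parent j), f j) ∈ E else (f j, f (parent j)) ∈ E)) ∧
        (∀ j, σ (f j) = g j))).card
    = (Finset.univ.filter (fun v => σ v = g 0)).card *
      ∏ j ∈ Finset.univ.filter (fun j : Fin (n + 1) => j ≠ 0),
        (if dir j then τout (g (parent j)) (g j) else τin (g (parent j)) (g j)) := by
  intro n
  induction n with
  | zero =>
    intro parent dir hpar g
    have hall : ∀ j : Fin 1, j = 0 := fun j => Fin.ext (by omega)
    have hempty : (Finset.univ.filter (fun j : Fin 1 => j ≠ 0)) = ∅ := by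
      apply Finset.filter_false_of_mem
      intro j _
      simp [hall j]
    rw [hempty, Finset.prod_empty, mul_one]
    apply Finset.card_nbij' (fun f => f 0) (fun v => fun _ => v)
    · intro f hf
      simp only [Finset.mem_coe, mem_filter, mem_univ, true_and] at hf ⊢
      exact hf.2 0
    · intro v hv
      simp only [Finset.mem_coe, mem_filter, mem_univ, true_and] at hv ⊢
      constructor
      · intro j hj; exact absurd (hall j) hj
      · intro j; rw [hall j]; exact hv
    · intro f _; funext j; rw [hall j]
    · intro v _; rfl
  | succ n ih =>
    intro parent dir hpar g
    set L : Fin (n + 2) := Fin.last (n + 1) with hLdef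
    have hL0 : L ≠ 0 := by
      simp [hLdef, Fin.ext_iff]
    have hpL : parent L < L := hpar L hL0
    have hcs0 : ∀ j : Fin (n + 1), j.castSucc = 0 ↔ j = 0 := fun j => Fin.castSucc_eq_zero_iff
    have hparval : ∀ j : Fin (n + 1), j ≠ 0 → ((parent j.castSucc) : ℕ) < n + 1 := by
      intro j hj
      have h1 : parent j.castSucc < j.castSucc := hpar _ (by simpa [hcs0 j] using hj)
      have := j.isLt
      simp only [Fin.lt_def, Fin.coe_castSucc] at h1
      omega
    set parent' : Fin (n + 1) → Fin (n + 1) :=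
      fun j => ⟨((parent j.castSucc) : ℕ) % (n + 1), Nat.mod_lt _ n.succ_pos⟩ with hP'
    have hP'val : ∀ j : Fin (n + 1), j ≠ 0 → (parent' j).castSucc = parent j.castSucc := by
      intro j hj
      have := hparval j hj
      simp [hP', Fin.ext_iff, Nat.mod_eq_of_lt this]
    have hpar' : ∀ j : Fin (n + 1), j ≠ 0 → parent' j < j := by
      intro j hj
      rw [← Fin.castSucc_lt_castSucc_iff, hP'val j hj]
      exact hpar _ (by simpa [hcs0 j] using hj)
    set dir' : Fin (n + 1) → Bool := fun j => dir j.castSucc with hD'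
    set g' : Fin (n + 1) → C := fun j => g j.castSucc with hG'
    set p' : Fin (n + 1) := ⟨(parent L : ℕ), by have := hpL; simpa [hLdef, Fin.lt_def] using this⟩
      with hp'def
    have hp'cs : p'.castSucc = parent L := by simp [hp'def, Fin.ext_iff]
    set S : Finset (Fin (n + 2) → V) :=
      Finset.univ.filter (fun f =>
        (∀ j : Fin (n + 2), j ≠ 0 →
          (if dir j then (f (parent j), f j) ∈ E else (f j, f (parent j)) ∈ E)) ∧
        (∀ j, σ (f j) = g j)) with hS
    set S' : Finset (Fin (n + 1) → V) :=
      Finset.univ.filter (fun f =>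
        (∀ j : Fin (n + 1), j ≠ 0 →
          (if dir' j then (f (parent' j), f j) ∈ E else (f j, f (parent' j)) ∈ E)) ∧
        (∀ j, σ (f j) = g' j)) with hS'
    have hmaps : ∀ f ∈ S, (fun j : Fin (n + 1) => f j.castSucc) ∈ S' := by
      intro f hf
      simp only [hS, hS', mem_filter, mem_univ, true_and] at hf ⊢
      obtain ⟨he, hc⟩ := hf
      refine ⟨fun j hj => ?_, fun j => hc _⟩
      have hj' : j.castSucc ≠ 0 := by simpa [hcs0 j] using hj
      have := he j.castSucc hj'
      rw [hP'val j hj]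
      simpa [hD'] using this
    have hcard : S.card = ∑ f' ∈ S', (S.filter (fun f => (fun j : Fin (n+1) => f j.castSucc) = f')).card :=
      Finset.card_eq_sum_card_fiberwise hmaps
    set c : ℕ := if dir L then τout (g (parent L)) (g L) else τin (g (parent L)) (g L) with hc
    have hfiber : ∀ f' ∈ S', (S.filter (fun f => (fun j : Fin (n+1) => f j.castSucc) = f')).card = c := by
      intro f' hf'
      simp only [hS', mem_filter, mem_univ, true_and] at hf'
      obtain ⟨he', hc'⟩ := hf'
      set T : Finset V := Finset.univ.filter (fun v =>
        (if dir L then (f' p', v) ∈ E else (v, f' p') ∈ E) ∧ σ v = g L) with hT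
      have hσp : σ (f' p') = g (parent L) := by
        rw [← hp'cs]; exact hc' p'
      have hTcard : T.card = c := by
        cases hdL : dir L with
        | true =>
          have hTeq : T = Finset.univ.filter (fun v => (f' p', v) ∈ E ∧ σ v = g L) := by
            ext v; simp [hT, hdL]
          rw [hc, hdL, if_pos rfl, hTeq, ← hσp]
          exact hτout _ _
        | false =>
          have hTeq : T = Finset.univ.filter (fun v => (v, f' p') ∈ E ∧ σ v = g L) := by
            ext v; simp [hT, hdL]
          rw [hc, hdL, hTeq, ← hσp]
          simp only [Bool.false_eq_true, if_false]
          exact hτin _ _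
      rw [← hTcard]
      apply Finset.card_nbij' (fun f => f L) (fun v => Fin.snoc f' v)
      · intro f hf
        simp only [Finset.mem_coe, mem_filter, mem_univ, true_and, hS, hT] at hf ⊢
        obtain ⟨⟨he, hcc⟩, hfib⟩ := hf
        have hfp : f (parent L) = f' p' := by
          rw [← hp'cs]; exact congrFun hfib p'
        have := he L hL0
        rw [hfp] at this
        exact ⟨this, hcc L⟩
      · intro v hv
        simp only [Finset.mem_coe, mem_filter, mem_univ, true_and, hS, hT] at hv ⊢
        obtain ⟨hve, hvc⟩ := hv
        refine ⟨⟨fun j hj => ?_, fun j => ?_⟩, ?_⟩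
        · by_cases hjL : j = L
          · subst hjL
            rw [← hp'cs]
            simpa [hLdef, Fin.snoc_last, Fin.snoc_castSucc] using hve
          · set i : Fin (n + 1) := j.castPred (by simpa [hLdef] using hjL) with hi
            have hics : i.castSucc = j := Fin.castSucc_castPred j _
            have hi0 : i ≠ 0 := by
              intro h0
              apply hj
              rw [← hics, h0, Fin.castSucc_zero]
            have hpj : parent j = (parent' i).castSucc := by
              rw [hP'val i hi0, hics]
            rw [hpj, ← hics, Fin.snoc_castSucc, Fin.snoc_castSucc]
            have := he' i hi0
            simpa [hD'] using this
        · refine Fin.lastCases ?_ (fun i => ?_) j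
          · rw [Fin.snoc_last, ← hLdef]; exact hvc
          · rw [Fin.snoc_castSucc]; exact hc' i
        · funext j
          rw [Fin.snoc_castSucc]
      · intro f hf
        simp only [Finset.mem_coe, mem_filter, mem_univ, true_and, hS] at hf
        funext j
        beta_reduce
        refine Fin.lastCases ?_ (fun i => ?_) j
        · rw [Fin.snoc_last, ← hLdef]
        · rw [Fin.snoc_castSucc]
          exact (congrFun hf.2 i).symm
      · intro v _
        exact Fin.snoc_last _ _
    have hg'0 : g' 0 = g 0 := by simp [hG']
    have hprodeq : (∏ j ∈ Finset.univ.filter (fun j : Fin (n + 2) => j ≠ 0),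
          (if dir j then τout (g (parent j)) (g j) else τin (g (parent j)) (g j)))
        = (∏ j ∈ Finset.univ.filter (fun j : Fin (n + 1) => j ≠ 0),
          (if dir' j then τout (g' (parent' j)) (g' j) else τin (g' (parent' j)) (g' j))) * c := by
      rw [Finset.prod_filter, Finset.prod_filter, Fin.prod_univ_castSucc]
      congr 1
      · apply Finset.prod_congr rfl
        intro i _
        by_cases hi : i = 0
        · simp [hi]
        · rw [if_pos (by simpa [hcs0 i] using hi), if_pos hi]
          simp only [hD', hG', hP'val i hi]
    calc S.card = ∑ f' ∈ S', c := by rw [hcard]; exact Finset.sum_congr rfl hfiber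
      _ = S'.card * c := by rw [Finset.sum_const, smul_eq_mul]
      _ = ((Finset.univ.filter (fun v => σ v = g' 0)).card *
            ∏ j ∈ Finset.univ.filter (fun j : Fin (n + 1) => j ≠ 0),
              (if dir' j then τout (g' (parent' j)) (g' j) else τin (g' (parent' j)) (g' j))) * c := by
          rw [hS', ih parent' dir' hpar' g']
      _ = _ := by rw [hg'0, hprodeq, mul_assoc]

/-- Exactness of the lifted estimator under a stable coloring for acyclic queries. -/
theorem stmt2 {V C : Type*} [Fintype V] [DecidableEq V] [Fintype C] [DecidableEq C]
    (E : Finset (V × V)) (σ : V → C) (n : ℕ)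
    (parent : Fin (n + 1) → Fin (n + 1)) (dir : Fin (n + 1) → Bool)
    (hpar : ∀ j : Fin (n + 1), j ≠ 0 → parent j < j)
    (τout τin : C → C → ℕ)
    (hτout : ∀ (v : V) (c : C),
      (Finset.univ.filter (fun u => (v, u) ∈ E ∧ σ u = c)).card = τout (σ v) c)
    (hτin : ∀ (v : V) (c : C),
      (Finset.univ.filter (fun u => (u, v) ∈ E ∧ σ u = c)).card = τin (σ v) c) :
    let EQ : Finset (Fin (n + 1) × Fin (n + 1)) :=
      (Finset.univ.filter (fun j : Fin (n + 1) => j ≠ 0)).image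
        (fun j => if dir j then (parent j, j) else (j, parent j))
    let homQG : Finset (Fin (n + 1) → V) :=
      Finset.univ.filter (fun f => ∀ e ∈ EQ, (f e.1, f e.2) ∈ E)
    let homQF : Finset (Fin (n + 1) → C) :=
      Finset.univ.filter (fun g => ∀ e ∈ EQ, ∃ p ∈ E, σ p.1 = g e.1 ∧ σ p.2 = g e.2)
    let ψ : C → ℕ := fun c => (Finset.univ.filter (fun v => σ v = c)).card
    let W : (Fin (n + 1) → C) → ℕ := fun g =>
      ψ (g 0) * ∏ j ∈ Finset.univ.filter (fun j : Fin (n + 1) => j ≠ 0),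
        (if dir j then τout (g (parent j)) (g j) else τin (g (parent j)) (g j))
    (∀ g ∈ homQF, (homQG.filter (fun f => σ ∘ f = g)).card = W g) ∧
    (homQG.card = ∑ g ∈ homQF, W g) := by
  intro EQ homQG homQF ψ W
  have key : ∀ g : Fin (n + 1) → C,
      homQG.filter (fun f => σ ∘ f = g) =
      Finset.univ.filter (fun f : Fin (n + 1) → V =>
        (∀ j : Fin (n + 1), j ≠ 0 →
          (if dir j then (f (parent j), f j) ∈ E else (f j, f (parent j)) ∈ E)) ∧
        (∀ j, σ (f j) = g j)) := by
    intro g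
    ext f
    simp only [homQG, EQ, mem_filter, mem_univ, true_and, Finset.mem_image,
      funext_iff, Function.comp_apply]
    constructor
    · rintro ⟨he, hcc⟩
      refine ⟨fun j hj => ?_, hcc⟩
      cases hd : dir j with
      | true =>
        have := he (parent j, j) ⟨j, hj, by rw [hd, if_pos rfl]⟩
        simpa [hd] using this
      | false =>
        have := he (j, parent j) ⟨j, hj, by rw [hd]; simp⟩
        simpa [hd] using this
    · rintro ⟨he, hcc⟩
      refine ⟨?_, hcc⟩
      rintro e ⟨j, hj, rfl⟩
      have := he j hj
      cases hd : dir j with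
      | true => simpa [hd] using this
      | false => simpa [hd] using this
  have h1 : ∀ g : Fin (n + 1) → C, (homQG.filter (fun f => σ ∘ f = g)).card = W g := by
    intro g
    rw [key g]
    exact aux_count E σ τout τin hτout hτin n parent dir hpar g
  refine ⟨fun g _ => h1 g, ?_⟩
  have hmaps : ∀ f ∈ homQG, σ ∘ f ∈ homQF := by
    intro f hf
    simp only [homQG, homQF, mem_filter, mem_univ, true_and] at hf ⊢
    intro e he
    exact ⟨(f e.1, f e.2), hf e he, rfl, rfl⟩
  rw [Finset.card_eq_sum_card_fiberwise hmaps]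
  exact Finset.sum_congr rfl (fun g _ => h1 g)
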